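/- If three Hermitian operators X, Y, Z on ℂ² satisfy X² = Y² = Z² = I and pairwise anticommute (XY = −YX, XZ = −ZX, YZ = −ZY), then there exists a unitary U on ℂ² such that UXU† = σx, UZU† = σz, and UYU† = ±σy. -/

import Mathlib

open Matrix

noncomputable section

def σz : Matrix (Fin 2) (Fin 2) ℂ := !![1, 0; 0, -1]
def σx : Matrix (Fin 2) (Fin 2) ℂ := !![0, 1; 1, 0]
def σy : Matrix (Fin 2) (Fin 2) ℂ := !![0, -Complex.I; Complex.I, 0]

lemma sq_eq_neg_one' {b : ℂ} (h : b * b = -1) : b = Complex.I ∨ b = -Complex.I := by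
  have h0 : (b - Complex.I) * (b + Complex.I) = 0 := by
    have hI : Complex.I ^ 2 = -1 := Complex.I_sq
    ring_nf
    linear_combination h - hI
  rcases mul_eq_zero.mp h0 with h1 | h1
  · exact Or.inl (sub_eq_zero.mp h1)
  · exact Or.inr (eq_neg_of_add_eq_zero_left h1)

lemma classify (B : Matrix (Fin 2) (Fin 2) ℂ) (hH : B.IsHermitian) (hB2 : B * B = 1)
    (hax : B * σx = -(σx * B)) (haz : B * σz = -(σz * B)) : B = σy ∨ B = -σy := by
  have e00 : B 0 0 = 0 := by
    have := congrFun (congrFun haz 0) 0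
    simp [σz, Matrix.mul_apply, Matrix.vecMul, dotProduct, Fin.sum_univ_two] at this
    linear_combination this / 2
  have e11 : B 1 1 = 0 := by
    have := congrFun (congrFun haz 1) 1
    simp [σz, Matrix.mul_apply, Matrix.vecMul, dotProduct, Fin.sum_univ_two] at this
    linear_combination -this / 2
  have e10 : B 1 0 = -(B 0 1) := by
    have := congrFun (congrFun hax 0) 0
    simp [σx, Matrix.mul_apply, Matrix.vecMul, dotProduct, Fin.sum_univ_two] at this
    linear_combination this
  have hbb : B 0 1 * B 0 1 = -1 := by
    have := congrFun (congrFun hB2 0) 0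
    simp [Matrix.mul_apply, Fin.sum_univ_two, e00, e10] at this
    linear_combination -this
  rcases sq_eq_neg_one' hbb with hb | hb
  · right
    ext i j
    fin_cases i <;> fin_cases j <;>
      simp [σy, e00, e11, e10, hb]
  · left
    ext i j
    fin_cases i <;> fin_cases j <;>
      simp [σy, e00, e11, e10, hb]

theorem anticommuting_qubit_triple_unitarily_pauli
    (X Y Z : Matrix (Fin 2) (Fin 2) ℂ)
    (hX : X.IsHermitian) (hY : Y.IsHermitian) (hZ : Z.IsHermitian)
    (hX2 : X * X = 1) (hY2 : Y * Y = 1) (hZ2 : Z * Z = 1)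
    (hXY : X * Y = - (Y * X)) (hXZ : X * Z = - (Z * X)) (hYZ : Y * Z = - (Z * Y)) :
    ∃ U ∈ Matrix.unitaryGroup (Fin 2) ℂ,
      U * X * star U = σx ∧ U * Z * star U = σz ∧
      (U * Y * star U = σy ∨ U * Y * star U = -σy) := by
  -- Z ≠ -1
  have hZne : (1 : Matrix (Fin 2) (Fin 2) ℂ) + Z ≠ 0 := by
    intro h
    have hz : Z = -1 := eq_neg_of_add_eq_zero_right h
    rw [hz] at hXZ
    simp at hXZ
    have hx0 : X = 0 := by
      have h2 : (2 : ℂ) • X = 0 := by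
        rw [two_smul]
        nth_rewrite 1 [← hXZ]
        exact neg_add_cancel X
      simpa using h2
    rw [hx0] at hX2
    simp at hX2
  obtain ⟨i, j, hij⟩ : ∃ i j, ((1 : Matrix (Fin 2) (Fin 2) ℂ) + Z) i j ≠ 0 := by
    by_contra h
    push_neg at h
    exact hZne (by ext i j; exact h i j)
  set w : Fin 2 → ℂ := fun k => ((1 : Matrix (Fin 2) (Fin 2) ℂ) + Z) k j with hw_def
  have hZw : Z *ᵥ w = w := by
    funext k
    have hcalc : (Z * (1 + Z)) k j = ((1 : Matrix (Fin 2) (Fin 2) ℂ) + Z) k j := by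
      rw [mul_add, mul_one, hZ2]; rw [add_comm]
    simpa [Matrix.mul_apply, mulVec, dotProduct, hw_def] using hcalc
  -- normalization
  set nr : ℝ := Complex.normSq (w 0) + Complex.normSq (w 1) with hnr_def
  have hnrpos : 0 < nr := by
    have hpos : 0 < Complex.normSq (w i) := Complex.normSq_pos.mpr hij
    have h0 : 0 ≤ Complex.normSq (w 0) := Complex.normSq_nonneg _
    have h1 : 0 ≤ Complex.normSq (w 1) := Complex.normSq_nonneg _
    rw [hnr_def]
    rcases (show i = 0 ∨ i = 1 from by omega) with h' | h' <;> rw [h'] at hpos <;> linarith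
  set r : ℝ := Real.sqrt nr with hr_def
  have hrpos : 0 < r := Real.sqrt_pos.mpr hnrpos
  have hr2 : (r : ℂ) * (r : ℂ) = (nr : ℂ) := by
    norm_cast
    exact Real.mul_self_sqrt hnrpos.le
  set v0 : Fin 2 → ℂ := ((r : ℂ)⁻¹) • w with hv0_def
  have hZv0 : Z *ᵥ v0 = v0 := by
    rw [hv0_def, Matrix.mulVec_smul, hZw]
  have n00 : star v0 ⬝ᵥ v0 = 1 := by
    have hsw : star w ⬝ᵥ w = (nr : ℂ) := by
      simp [dotProduct, Fin.sum_univ_two, hnr_def, Complex.normSq_eq_conj_mul_self]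
      try push_cast
      try ring
    have hrne : (r : ℂ) ≠ 0 := by exact_mod_cast hrpos.ne'
    rw [hv0_def]
    simp [dotProduct, Fin.sum_univ_two, Pi.smul_apply, smul_eq_mul] at hsw ⊢
    field_simp
    first
      | (rw [hsw]; exact hr2.symm)
      | rw [hsw]
      | (rw [hsw]; linear_combination hr2)
    linear_combination -hr2
  set v1 : Fin 2 → ℂ := X *ᵥ v0 with hv1_def
  have hXv0 : X *ᵥ v0 = v1 := rfl
  have hXv1 : X *ᵥ v1 = v0 := by
    rw [hv1_def, Matrix.mulVec_mulVec, hX2, Matrix.one_mulVec]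
  have hZv1 : Z *ᵥ v1 = -v1 := by
    rw [hv1_def, Matrix.mulVec_mulVec]
    have hZX : Z * X = -(X * Z) := by rw [hXZ, neg_neg]
    rw [hZX, Matrix.neg_mulVec, ← Matrix.mulVec_mulVec, hZv0]
  -- dot product facts
  have dot_mulVec_herm : ∀ (W : Matrix (Fin 2) (Fin 2) ℂ), W.IsHermitian →
      ∀ a b : Fin 2 → ℂ, star (W *ᵥ a) ⬝ᵥ b = star a ⬝ᵥ (W *ᵥ b) := by
    intro W hW a b
    rw [Matrix.star_mulVec, ← Matrix.dotProduct_mulVec, hW.eq]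
  have n11 : star v1 ⬝ᵥ v1 = 1 := by
    have := dot_mulVec_herm X hX v0 v1
    rw [hXv0, hXv1] at this
    rw [this]; exact n00
  have n01 : star v0 ⬝ᵥ v1 = 0 := by
    have h1 := dot_mulVec_herm Z hZ v0 v1
    rw [hZv0, hZv1] at h1
    simp only [dotProduct_neg] at h1
    linear_combination h1 / 2
  have n10 : star v1 ⬝ᵥ v0 = 0 := by
    have h1 := dot_mulVec_herm Z hZ v1 v0
    rw [hZv0, hZv1] at h1
    simp only [star_neg, neg_dotProduct] at h1
    linear_combination -h1 / 2
  -- the unitary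
  set v : Fin 2 → Fin 2 → ℂ := ![v0, v1] with hv_def
  set V : Matrix (Fin 2) (Fin 2) ℂ := Matrix.of (fun k l => v l k) with hV_def
  set U : Matrix (Fin 2) (Fin 2) ℂ := Vᴴ with hU_def
  have hstarU : star U = V := by
    rw [hU_def]
    exact Matrix.conjTranspose_conjTranspose V
  have key : ∀ (W : Matrix (Fin 2) (Fin 2) ℂ) (a b : Fin 2),
      (Vᴴ * W * V) a b = star (v a) ⬝ᵥ (W *ᵥ v b) := by
    intro W a b
    simp [Matrix.mul_apply, Matrix.mulVec, dotProduct, Matrix.conjTranspose_apply,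
      Fin.sum_univ_two, hV_def]
    ring
  have hv0 : v 0 = v0 := rfl
  have hv1 : v 1 = v1 := rfl
  have hUV : Vᴴ * V = 1 := by
    have h : Vᴴ * V = Vᴴ * 1 * V := by rw [mul_one]
    ext a b
    rw [h, key 1 a b, Matrix.one_mulVec]
    fin_cases a <;> fin_cases b <;>
      simp [hv0, hv1, n00, n01, n10, n11, Matrix.one_apply]
  have hUmem : U ∈ Matrix.unitaryGroup (Fin 2) ℂ := by
    rw [Matrix.mem_unitaryGroup_iff, hstarU]
    exact hUV
  have hVU : V * U = 1 := mul_eq_one_comm.mp hUV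
  have hXconj : U * X * V = σx := by
    rw [hU_def]
    ext a b
    rw [key X a b]
    fin_cases a <;> fin_cases b <;>
      simp [hv0, hv1, hXv0, hXv1, n00, n01, n10, n11, σx]
  have hZconj : U * Z * V = σz := by
    rw [hU_def]
    ext a b
    rw [key Z a b]
    fin_cases a <;> fin_cases b <;>
      simp [hv0, hv1, hZv0, hZv1, n00, n01, n10, n11, σz]
  have conjmul : ∀ A C : Matrix (Fin 2) (Fin 2) ℂ,
      (U * A * V) * (U * C * V) = U * (A * C) * V := by
    intro A C
    have h1 : (U * A * V) * (U * C * V) = U * A * (V * U) * C * V := by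
      noncomm_ring
    rw [h1, hVU, Matrix.mul_one]
    noncomm_ring
  set B : Matrix (Fin 2) (Fin 2) ℂ := U * Y * V with hB_def
  have hUadj : Uᴴ = V := by rw [hU_def, Matrix.conjTranspose_conjTranspose]
  have hBH : B.IsHermitian := by
    show Bᴴ = B
    rw [hB_def]
    simp only [Matrix.conjTranspose_mul]
    rw [hY.eq, hUadj, ← hU_def]
    noncomm_ring
  have hB2 : B * B = 1 := by
    rw [hB_def, conjmul, hY2, Matrix.mul_one, hUV]
  have hBx : B * σx = -(σx * B) := by
    have hYX : Y * X = -(X * Y) := by rw [hXY, neg_neg]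
    rw [← hXconj, hB_def, conjmul, conjmul, hYX]
    simp [Matrix.mul_neg, Matrix.neg_mul]
  have hBz : B * σz = -(σz * B) := by
    rw [← hZconj, hB_def, conjmul, conjmul, hYZ]
    simp [Matrix.mul_neg, Matrix.neg_mul]
  refine ⟨U, hUmem, ?_, ?_, ?_⟩
  · rw [hstarU]; exact hXconj
  · rw [hstarU]; exact hZconj
  · rw [hstarU]
    exact classify B hBH hB2 hBx hBz
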